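/- Let W have the chi-squared density f_W(w) = w^{q/2-1} e^{-w/2} / (2^{q/2} Γ(q/2)) on (0,∞) and let Z have the truncated chi-squared density f_Z(z) = z^{p/2-1} e^{-z/2} / (2^{p/2} (1 - Φ_G(pλ²/2)) Γ(p/2)) on [pλ², ∞), with W and Z independent. Then S = W + Z has density f_S(s) = f_C(s) · (1 - Φ_B(pλ²/s; p/2, q/2)) / (1 - Φ_G(pλ²/2)) for s > pλ², where f_C is the chi-squared density with p + q degrees of freedom and Φ_B(·; a, b) is the CDF of the Beta(a, b) distribution. -/

import Mathlib

open MeasureTheory ProbabilityTheory Real Filter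

noncomputable def stdPDF (x : ℝ) : ℝ := (Real.sqrt (2 * Real.pi))⁻¹ * Real.exp (-x ^ 2 / 2)

noncomputable def stdCDF (x : ℝ) : ℝ := ∫ t in Set.Iic x, stdPDF t

noncomputable def gammaCDF (s x : ℝ) : ℝ :=
  ∫ t in Set.Ioc 0 x, t ^ (s - 1) * Real.exp (-t) / Real.Gamma s
noncomputable def chiSqPDF (k c : ℝ) : ℝ :=
  c ^ (k / 2 - 1) * Real.exp (-c / 2) / (2 ^ (k / 2) * Real.Gamma (k / 2))

noncomputable def truncChiSqPDF (p lam z : ℝ) : ℝ :=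
  z ^ (p / 2 - 1) * Real.exp (-z / 2)
    / (2 ^ (p / 2) * (1 - gammaCDF (p / 2) (p * lam ^ 2 / 2)) * Real.Gamma (p / 2))

noncomputable def betaCDF (a b x : ℝ) : ℝ :=
  ∫ r in Set.Ioc 0 x,
    r ^ (a - 1) * (1 - r) ^ (b - 1) * (Real.Gamma (a + b) / (Real.Gamma a * Real.Gamma b))


lemma betaEqOn {u v : ℝ} :
    Set.EqOn (fun x : ℝ => ((x ^ (u-1) * (1-x) ^ (v-1) : ℝ) : ℂ))
      (fun x : ℝ => (x:ℂ) ^ ((u:ℂ) - 1) * (1 - (x:ℂ)) ^ ((v:ℂ) - 1)) (Set.uIcc 0 1) := by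
  intro x hx
  rw [Set.uIcc_of_le zero_le_one] at hx
  obtain ⟨h0, h1⟩ := hx
  have e1 : ((x ^ (u-1) : ℝ) : ℂ) = (x:ℂ) ^ ((u:ℂ) - 1) := by
    rw [Complex.ofReal_cpow h0]; push_cast; ring_nf
  have e2 : (((1-x) ^ (v-1) : ℝ) : ℂ) = (1 - (x:ℂ)) ^ ((v:ℂ) - 1) := by
    rw [Complex.ofReal_cpow (by linarith)]; push_cast; ring_nf
  simp only [Complex.ofReal_mul, e1, e2]

lemma betaIntegrable {u v : ℝ} (hu : 0 < u) (hv : 0 < v) :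
    IntervalIntegrable (fun x : ℝ => x ^ (u-1) * (1-x) ^ (v-1)) volume 0 1 := by
  have h := Complex.betaIntegral_convergent (u := u) (v := v) (by simpa) (by simpa)
  rw [intervalIntegrable_iff] at h ⊢
  refine (h.re).congr ((ae_restrict_iff' measurableSet_uIoc).mpr (ae_of_all _ fun x hx => ?_))
  have hx' : x ∈ Set.uIcc (0:ℝ) 1 := Set.uIoc_subset_uIcc hx
  have h3 : ((x:ℂ) ^ ((u:ℂ) - 1) * (1 - (x:ℂ)) ^ ((v:ℂ) - 1))
      = ((x ^ (u-1) * (1-x) ^ (v-1) : ℝ) : ℂ) := (betaEqOn hx').symm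
  simp only [h3, Complex.ofReal_re, RCLike.re_to_complex]

lemma betaIntegral_real {u v : ℝ} (hu : 0 < u) (hv : 0 < v) :
    ∫ x in (0:ℝ)..1, x ^ (u-1) * (1-x) ^ (v-1)
      = Real.Gamma u * Real.Gamma v / Real.Gamma (u+v) := by
  have hB := Complex.Gamma_mul_Gamma_eq_betaIntegral (s := u) (t := v) (by simpa) (by simpa)
  have hint : Complex.betaIntegral u v
      = ((∫ x in (0:ℝ)..1, x ^ (u-1) * (1-x) ^ (v-1) : ℝ) : ℂ) := by
    rw [Complex.betaIntegral, ← intervalIntegral.integral_ofReal]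
    exact intervalIntegral.integral_congr betaEqOn.symm
  rw [hint, Complex.Gamma_ofReal, Complex.Gamma_ofReal, ← Complex.ofReal_add,
    Complex.Gamma_ofReal] at hB
  have hG : Real.Gamma (u+v) ≠ 0 := (Real.Gamma_pos_of_pos (by linarith)).ne'
  rw [← Complex.ofReal_mul, ← Complex.ofReal_mul] at hB
  have h3 : Real.Gamma u * Real.Gamma v
      = Real.Gamma (u+v) * ∫ x in (0:ℝ)..1, x ^ (u-1) * (1-x) ^ (v-1) := by
    exact_mod_cast hB
  field_simp [h3]
  rw [h3]; ring

lemma gammaCDF_lt_one {s : ℝ} (hs : 0 < s) (x : ℝ) : gammaCDF s x < 1 := by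
  have hG : 0 < Real.Gamma s := Real.Gamma_pos_of_pos hs
  have hconv := Real.GammaIntegral_convergent hs
  rw [gammaCDF]
  simp_rw [div_eq_mul_inv, integral_mul_const]
  have key : (∫ t in Set.Ioc 0 x, t ^ (s-1) * Real.exp (-t)) < Real.Gamma s := ?_
  · calc (∫ t in Set.Ioc 0 x, t ^ (s-1) * Real.exp (-t)) * (Real.Gamma s)⁻¹
        < Real.Gamma s * (Real.Gamma s)⁻¹ := by
          exact mul_lt_mul_of_pos_right key (inv_pos.mpr hG)
      _ = 1 := by field_simp
  rcases le_or_gt x 0 with hx | hx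
  · rw [Set.Ioc_eq_empty (by exact fun h => absurd (h.trans_le hx) (lt_irrefl 0)),
      setIntegral_empty]
    exact hG
  · have hsplit : Set.Ioi (0:ℝ) = Set.Ioc 0 x ∪ Set.Ioi x := (Set.Ioc_union_Ioi_eq_Ioi hx.le).symm
    have hint1 : IntegrableOn (fun t : ℝ => Real.exp (-t) * t ^ (s-1)) (Set.Ioc 0 x) volume :=
      hconv.mono_set (Set.Ioc_subset_Ioi_self)
    have hint2 : IntegrableOn (fun t : ℝ => Real.exp (-t) * t ^ (s-1)) (Set.Ioi x) volume :=
      hconv.mono_set (fun t ht => lt_trans hx ht)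
    have heq : ∀ S : Set ℝ, (∫ t in S, t ^ (s-1) * Real.exp (-t))
        = ∫ t in S, Real.exp (-t) * t ^ (s-1) := fun S => by
      congr 1; ext t; ring
    rw [heq, Real.Gamma_eq_integral hs, hsplit,
      setIntegral_union (Set.Ioc_disjoint_Ioi le_rfl) measurableSet_Ioi hint1 hint2]
    have hpos : 0 < ∫ t in Set.Ioi x, Real.exp (-t) * t ^ (s-1) := by
      rw [setIntegral_pos_iff_support_of_nonneg_ae ?_ hint2]
      · have hsub : Set.Ioi x ⊆ Function.support (fun t => Real.exp (-t) * t ^ (s-1)) := by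
          intro t ht
          have ht0 : 0 < t := lt_trans hx ht
          exact ne_of_gt (by positivity)
        rw [Set.inter_eq_self_of_subset_right hsub]
        simp [hx]
      · refine (ae_restrict_iff' measurableSet_Ioi).mpr (ae_of_all _ fun t ht => ?_)
        have : 0 < t := lt_trans hx ht
        positivity
    linarith

theorem convolution_density (p q : ℕ) (hp : 0 < p) (hq : 0 < q) (lam : ℝ) (hlam : 0 < lam) :
    ∀ s : ℝ, (p : ℝ) * lam ^ 2 < s →
      (∫ t in Set.Icc ((p : ℝ) * lam ^ 2) s, chiSqPDF q (s - t) * truncChiSqPDF p lam t)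
        = chiSqPDF ((p : ℝ) + q) s
            * (1 - betaCDF ((p : ℝ) / 2) ((q : ℝ) / 2) ((p : ℝ) * lam ^ 2 / s))
            / (1 - gammaCDF ((p : ℝ) / 2) ((p : ℝ) * lam ^ 2 / 2)) := by
  intro s hs
  set a : ℝ := (p : ℝ) * lam ^ 2 with ha_def
  set u : ℝ := (p : ℝ) / 2 with hu_def
  set v : ℝ := (q : ℝ) / 2 with hv_def
  have ha : 0 < a := by positivity
  have hs0 : 0 < s := ha.trans hs
  have hu : 0 < u := by positivity
  have hv : 0 < v := by positivity
  have hGu : 0 < Real.Gamma u := Real.Gamma_pos_of_pos hu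
  have hGv : 0 < Real.Gamma v := Real.Gamma_pos_of_pos hv
  have hGuv : 0 < Real.Gamma (u + v) := Real.Gamma_pos_of_pos (by linarith)
  set D : ℝ := 1 - gammaCDF u (a / 2) with hD_def
  have hD : 0 < D := by
    have := gammaCDF_lt_one hu (a / 2); simp only [hD_def]; linarith
  set c : ℝ := Real.exp (-s/2) / (2 ^ v * Real.Gamma v * (2 ^ u * D * Real.Gamma u)) with hc_def
  -- pointwise identity
  have hpoint : ∀ t : ℝ, chiSqPDF q (s - t) * truncChiSqPDF p lam t
      = c * ((s - t) ^ (v - 1) * t ^ (u - 1)) := by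
    intro t
    simp only [chiSqPDF, truncChiSqPDF, ← hu_def, ← hv_def, ← ha_def, ← hD_def, hc_def]
    have hexp : Real.exp (-(s - t)/2) * Real.exp (-t/2) = Real.exp (-s/2) := by
      rw [← Real.exp_add]; ring_nf
    have h2u : (0:ℝ) < 2 ^ u := Real.rpow_pos_of_pos two_pos u
    have h2v : (0:ℝ) < 2 ^ v := Real.rpow_pos_of_pos two_pos v
    rw [div_mul_div_comm]
    rw [show (s - t) ^ (v - 1) * Real.exp (-(s - t) / 2) * (t ^ (u - 1) * Real.exp (-t / 2))
        = (s - t) ^ (v - 1) * t ^ (u - 1) * (Real.exp (-(s - t)/2) * Real.exp (-t/2)) by ring,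
      hexp]
    field_simp
  -- rewrite LHS as interval integral
  rw [MeasureTheory.integral_Icc_eq_integral_Ioc, ← intervalIntegral.integral_of_le hs.le]
  simp_rw [hpoint]
  rw [intervalIntegral.integral_const_mul]
  -- substitution t = s * x
  have hsub := intervalIntegral.integral_comp_mul_left
    (a := a / s) (b := 1) (fun t : ℝ => (s - t) ^ (v - 1) * t ^ (u - 1)) hs0.ne'
  rw [mul_one, show s * (a / s) = a by field_simp] at hsub
  have hJ : (∫ t in a..s, (s - t) ^ (v - 1) * t ^ (u - 1))
      = s * ∫ x in (a/s)..1, (s - s * x) ^ (v - 1) * (s * x) ^ (u - 1) := by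
    rw [hsub, smul_eq_mul, ← mul_assoc, mul_inv_cancel₀ hs0.ne', one_mul]
  rw [hJ]
  have has1 : a / s < 1 := (div_lt_one hs0).mpr hs
  have has0 : 0 < a / s := div_pos ha hs0
  -- rescale integrand
  have hres : Set.EqOn (fun x : ℝ => (s - s * x) ^ (v - 1) * (s * x) ^ (u - 1))
      (fun x : ℝ => s ^ (v - 1) * s ^ (u - 1) * (x ^ (u - 1) * (1 - x) ^ (v - 1)))
      (Set.uIcc (a/s) 1) := by
    intro x hx
    rw [Set.uIcc_of_le has1.le] at hx
    have hx0 : 0 ≤ x := le_trans has0.le hx.1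
    have hx1 : 0 ≤ 1 - x := by linarith [hx.2]
    simp only
    rw [show s - s * x = s * (1 - x) by ring, Real.mul_rpow hs0.le hx1,
      Real.mul_rpow hs0.le hx0]
    ring
  rw [intervalIntegral.integral_congr hres, intervalIntegral.integral_const_mul]
  set I : ℝ := ∫ x in (a/s)..1, x ^ (u - 1) * (1 - x) ^ (v - 1) with hI_def
  -- betaCDF identity
  have hbeta1 : betaCDF u v (a/s) = (∫ r in (0:ℝ)..(a/s), r ^ (u-1) * (1-r) ^ (v-1))
      * (Real.Gamma (u + v) / (Real.Gamma u * Real.Gamma v)) := by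
    rw [betaCDF, intervalIntegral.integral_of_le has0.le, ← integral_mul_const]
  have hint01 := betaIntegrable hu hv
  have hint1 : IntervalIntegrable (fun x : ℝ => x ^ (u-1) * (1-x) ^ (v-1)) volume 0 (a/s) :=
    hint01.mono_set (by
      rw [Set.uIcc_of_le has0.le, Set.uIcc_of_le zero_le_one]
      exact Set.Icc_subset_Icc le_rfl has1.le)
  have hint2 : IntervalIntegrable (fun x : ℝ => x ^ (u-1) * (1-x) ^ (v-1)) volume (a/s) 1 :=
    hint01.mono_set (by
      rw [Set.uIcc_of_le has1.le, Set.uIcc_of_le zero_le_one]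
      exact Set.Icc_subset_Icc has0.le le_rfl)
  have hadd := intervalIntegral.integral_add_adjacent_intervals hint1 hint2
  rw [betaIntegral_real hu hv] at hadd
  have hkey : 1 - betaCDF u v (a/s)
      = I * (Real.Gamma (u + v) / (Real.Gamma u * Real.Gamma v)) := by
    have hsum : (∫ r in (0:ℝ)..(a/s), r ^ (u-1) * (1-r) ^ (v-1))
        = Real.Gamma u * Real.Gamma v / Real.Gamma (u+v) - I := by
      rw [hI_def, ← hadd]; ring
    rw [hbeta1, hsum]
    field_simp
    ring
  rw [hkey]
  -- final algebra
  simp only [chiSqPDF]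
  have hk2 : ((p:ℝ) + q) / 2 = u + v := by rw [hu_def, hv_def]; ring
  rw [hk2]
  have h2u : (0:ℝ) < 2 ^ u := Real.rpow_pos_of_pos two_pos u
  have h2v : (0:ℝ) < 2 ^ v := Real.rpow_pos_of_pos two_pos v
  have h2uv : (2:ℝ) ^ (u + v) = 2 ^ u * 2 ^ v := Real.rpow_add two_pos u v
  have hsuv : s * s ^ (v - 1) * s ^ (u - 1) = s ^ (u + v - 1) := by
    rw [show u + v - 1 = 1 + (v - 1) + (u - 1) by ring, Real.rpow_add hs0,
      Real.rpow_add hs0, Real.rpow_one]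
  rw [hc_def, h2uv, ← hsuv]
  field_simp [hD.ne', hGu.ne', hGv.ne', hGuv.ne', h2u.ne', h2v.ne', Real.exp_ne_zero]
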